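/- (Corollary of the Projection Lemma) Let H = H₁ + H₂ be a sum of two Hermitian operators on a finite-dimensional complex Hilbert space ℋ, let S ⊆ ℋ be a nonzero subspace with H₁ψ = 0 for every ψ ∈ S and ⟨ψ, H₁ψ⟩ ≥ J‖ψ‖² for every ψ ∈ S^⊥, and set K := ‖H₂‖ with J > 2K. Then for any δ ≥ 0 and any unit vector ψ satisfying ⟨ψ, Hψ⟩ ≤ λ(H) + δ, there exists a unit vector ψ′ ∈ S such that |⟨ψ, ψ′⟩|² ≥ 1 − ((K + √(K² + δ(J − 2K)))/(J − 2K))². -/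

import Mathlib

variable {E : Type*} [NormedAddCommGroup E] [InnerProductSpace ℂ E] [FiniteDimensional ℂ E]

noncomputable def minEigenvalue (H : E →L[ℂ] E) : ℝ :=
  sInf {r : ℝ | ∃ ψ : E, ‖ψ‖ = 1 ∧ (inner (𝕜 := ℂ) ψ (H ψ)).re = r}

private lemma minEig_le (H : E →L[ℂ] E) (φ : E) (hφ : ‖φ‖ = 1) :
    minEigenvalue H ≤ (inner (𝕜 := ℂ) φ (H φ)).re := by
  apply csInf_le
  · refine ⟨-‖H‖, ?_⟩
    rintro r ⟨χ, hχ, rfl⟩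
    have h1 : ‖(inner (𝕜 := ℂ) χ (H χ))‖ ≤ ‖H‖ := by
      calc ‖(inner (𝕜 := ℂ) χ (H χ))‖ ≤ ‖χ‖ * ‖H χ‖ := norm_inner_le_norm _ _
        _ ≤ ‖χ‖ * (‖H‖ * ‖χ‖) := by
            exact mul_le_mul_of_nonneg_left (H.le_opNorm χ) (norm_nonneg _)
        _ = ‖H‖ := by rw [hχ]; ring
    have h2 := Complex.abs_re_le_norm (inner (𝕜 := ℂ) χ (H χ))
    have := abs_le.mp (h2.trans h1)
    linarith [this.1]
  · exact ⟨φ, hφ, rfl⟩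

private lemma quad_root (J K δ t : ℝ) (hK : 0 ≤ K) (hδ : 0 ≤ δ) (hJ : 0 < J - 2 * K)
    (ht : 0 ≤ t) (h : (J - 2 * K) * t ^ 2 ≤ δ + 2 * K * t) :
    t ≤ (K + Real.sqrt (K ^ 2 + δ * (J - 2 * K))) / (J - 2 * K) := by
  set D := Real.sqrt (K ^ 2 + δ * (J - 2 * K)) with hD
  have hDnn : 0 ≤ D := Real.sqrt_nonneg _
  have hDsq : D ^ 2 = K ^ 2 + δ * (J - 2 * K) := by
    rw [hD, Real.sq_sqrt]; positivity
  rw [le_div_iff₀ hJ]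
  nlinarith [sq_nonneg (t * (J - 2 * K) - K - D), sq_nonneg (t * (J - 2 * K) - K)]

set_option maxHeartbeats 2000000 in
theorem projection_lemma_corollary
    (H₁ H₂ : E →L[ℂ] E) (hH₁ : IsSelfAdjoint H₁) (hH₂ : IsSelfAdjoint H₂)
    (S : Submodule ℂ E) (hS : S ≠ ⊥) (J K : ℝ) (hK : K = ‖H₂‖)
    (hker : ∀ ψ ∈ S, H₁ ψ = 0)
    (hbig : ∀ ψ ∈ Sᗮ, J * ‖ψ‖ ^ 2 ≤ (inner (𝕜 := ℂ) ψ (H₁ ψ)).re)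
    (hJ : 2 * K < J) (δ : ℝ) (hδ : 0 ≤ δ)
    (ψ : E) (hψ : ‖ψ‖ = 1)
    (hlow : (inner (𝕜 := ℂ) ψ ((H₁ + H₂) ψ)).re ≤ minEigenvalue (H₁ + H₂) + δ) :
    ∃ ψ' ∈ S, ‖ψ'‖ = 1 ∧
      1 - ((K + Real.sqrt (K ^ 2 + δ * (J - 2 * K))) / (J - 2 * K)) ^ 2 ≤
        ‖inner (𝕜 := ℂ) ψ ψ'‖ ^ 2 := by
  have hKnn : (0:ℝ) ≤ K := hK ▸ norm_nonneg _
  have hJ2 : (0:ℝ) < J - 2 * K := by linarith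
  have hsym := ContinuousLinearMap.isSelfAdjoint_iff_isSymmetric.mp hH₁
  set D := Real.sqrt (K ^ 2 + δ * (J - 2 * K)) with hD
  have hDnn : 0 ≤ D := Real.sqrt_nonneg _
  set T := (K + D) / (J - 2 * K) with hT
  clear_value D T
  obtain ⟨p, hpS, q, hqS, hψeq⟩ : ∃ p ∈ S, ∃ q ∈ Sᗮ, ψ = p + q :=
    ⟨(S.orthogonalProjectionOnto ψ : E), (S.orthogonalProjectionOnto ψ).2,
      ψ - (S.orthogonalProjectionOnto ψ : E), S.sub_starProjection_mem_orthogonal ψ, by abel⟩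
  have hpq : (inner (𝕜 := ℂ) p q) = 0 :=
    Submodule.inner_right_of_mem_orthogonal hpS hqS
  have hqp : (inner (𝕜 := ℂ) q p) = 0 :=
    Submodule.inner_left_of_mem_orthogonal hpS hqS
  have hpyth : ‖p‖ ^ 2 + ‖q‖ ^ 2 = 1 := by
    have := norm_add_sq (𝕜 := ℂ) p q
    rw [← hψeq, hψ, hpq] at this
    simp at this
    linarith
  have hbnd : ∀ x y : E, -(K * ‖x‖ * ‖y‖) ≤ (inner (𝕜 := ℂ) x (H₂ y)).re ∧
      (inner (𝕜 := ℂ) x (H₂ y)).re ≤ K * ‖x‖ * ‖y‖ := by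
    intro x y
    have h1 : ‖(inner (𝕜 := ℂ) x (H₂ y))‖ ≤ K * ‖x‖ * ‖y‖ := by
      calc ‖(inner (𝕜 := ℂ) x (H₂ y))‖ ≤ ‖x‖ * ‖H₂ y‖ := norm_inner_le_norm _ _
        _ ≤ ‖x‖ * (‖H₂‖ * ‖y‖) :=
            mul_le_mul_of_nonneg_left (H₂.le_opNorm y) (norm_nonneg _)
        _ = K * ‖x‖ * ‖y‖ := by rw [hK]; ring
    have h2 := Complex.abs_re_le_norm (inner (𝕜 := ℂ) x (H₂ y))
    have := abs_le.mp (h2.trans h1)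
    exact ⟨this.1, this.2⟩
  have hH₁p : H₁ p = 0 := hker p hpS
  have hinnerH1 : (inner (𝕜 := ℂ) ψ (H₁ ψ)) = inner (𝕜 := ℂ) q (H₁ q) := by
    have h0 : (inner (𝕜 := ℂ) p (H₁ q)) = inner (𝕜 := ℂ) (H₁ p) q := (hsym p q).symm
    rw [hψeq, map_add, hH₁p, zero_add, inner_add_left, h0, hH₁p, inner_zero_left, zero_add]
  have hinnerH2 : (inner (𝕜 := ℂ) ψ (H₂ ψ)).re =
      (inner (𝕜 := ℂ) p (H₂ p)).re + (inner (𝕜 := ℂ) p (H₂ q)).re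
      + (inner (𝕜 := ℂ) q (H₂ p)).re + (inner (𝕜 := ℂ) q (H₂ q)).re := by
    rw [hψeq, map_add, inner_add_left, inner_add_right, inner_add_right]
    simp [Complex.add_re]
    ring
  have hray : (inner (𝕜 := ℂ) ψ ((H₁ + H₂) ψ)).re =
      (inner (𝕜 := ℂ) q (H₁ q)).re + (inner (𝕜 := ℂ) ψ (H₂ ψ)).re := by
    rw [ContinuousLinearMap.add_apply, inner_add_right, Complex.add_re, hinnerH1]
  by_cases hp0 : p = 0
  · obtain ⟨x, hxS, hx0⟩ := Submodule.exists_mem_ne_zero_of_ne_bot hS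
    set φ : E := (‖x‖ : ℂ)⁻¹ • x with hφ
    have hxn : ‖x‖ ≠ 0 := norm_ne_zero_iff.mpr hx0
    have hφn : ‖φ‖ = 1 := by
      rw [hφ, norm_smul]
      simp [hxn]
    have hφS : φ ∈ S := S.smul_mem _ hxS
    refine ⟨φ, hφS, hφn, ?_⟩
    have hq1 : ‖q‖ = 1 := by
      have : ‖p‖ = 0 := by rw [hp0]; simp
      nlinarith [norm_nonneg q]
    have h1 : J - K ≤ (inner (𝕜 := ℂ) ψ ((H₁ + H₂) ψ)).re := by
      rw [hray]
      have hb := hbig q hqS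
      rw [hq1] at hb
      have h2 := (hbnd ψ ψ).1
      rw [hψ] at h2
      simp at hb h2 ⊢
      linarith
    have h2 : minEigenvalue (H₁ + H₂) ≤ K := by
      have hm := minEig_le (H₁ + H₂) φ hφn
      have hH₁φ : H₁ φ = 0 := hker φ hφS
      rw [ContinuousLinearMap.add_apply, inner_add_right, hH₁φ, inner_zero_right,
        Complex.add_re] at hm
      have h3 := (hbnd φ φ).2
      rw [hφn] at h3
      simp at hm h3
      linarith
    have hδge : J - 2 * K ≤ δ := by linarith
    have hDge : J - 2 * K ≤ D := by
      rw [hD]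
      calc J - 2 * K = Real.sqrt ((J - 2*K)^2) := (Real.sqrt_sq hJ2.le).symm
        _ ≤ _ := Real.sqrt_le_sqrt (by nlinarith)
    have hT1 : 1 ≤ T := by
      rw [hT, le_div_iff₀ hJ2]
      linarith
    have hT2 : 1 - T ^ 2 ≤ 0 := by nlinarith
    calc 1 - T ^ 2 ≤ 0 := hT2
      _ ≤ _ := by positivity
  · have hpn : (0:ℝ) < ‖p‖ := norm_pos_iff.mpr hp0
    set ψ' : E := (‖p‖ : ℂ)⁻¹ • p with hψ'
    have hψ'n : ‖ψ'‖ = 1 := by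
      rw [hψ', norm_smul]
      simp [hpn.ne']
    have hψ'S : ψ' ∈ S := S.smul_mem _ hpS
    refine ⟨ψ', hψ'S, hψ'n, ?_⟩
    have hinψp : (inner (𝕜 := ℂ) ψ p) = ((‖p‖ ^ 2 : ℝ) : ℂ) := by
      rw [hψeq, inner_add_left, inner_self_eq_norm_sq_to_K, hqp, add_zero]
      norm_cast
    have hov : ‖inner (𝕜 := ℂ) ψ ψ'‖ ^ 2 = ‖p‖ ^ 2 := by
      rw [hψ', inner_smul_right, hinψp, ← Complex.ofReal_inv, ← Complex.ofReal_mul,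
        Complex.norm_real, Real.norm_eq_abs, abs_of_nonneg (by positivity)]
      field_simp
    rw [hov]
    set c := (inner (𝕜 := ℂ) p (H₂ p)).re with hc
    set b := ‖p‖ ^ 2 with hb
    set a := ‖q‖ ^ 2 with ha
    clear_value c b a
    have hbpos : 0 < b := by rw [hb]; positivity
    have hmin : minEigenvalue (H₁ + H₂) ≤ c / b := by
      have hm := minEig_le (H₁ + H₂) ψ' hψ'n
      have hH₁ψ' : H₁ ψ' = 0 := hker ψ' hψ'S
      rw [ContinuousLinearMap.add_apply, inner_add_right, hH₁ψ', inner_zero_right,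
        Complex.add_re] at hm
      have heq : (inner (𝕜 := ℂ) ψ' (H₂ ψ')).re = c / b := by
        rw [hψ', map_smul, inner_smul_left, inner_smul_right, ← Complex.ofReal_inv,
          Complex.conj_ofReal, ← mul_assoc, ← Complex.ofReal_mul, Complex.re_ofReal_mul,
          ← hc, hb]
        rw [div_eq_mul_inv, mul_comm]
        congr 1
        rw [sq]
        rw [mul_inv]
      rw [heq] at hm
      simpa using hm
    have hlb : J * a + c - 2 * (K * ‖p‖ * ‖q‖) - K * a ≤
        (inner (𝕜 := ℂ) ψ ((H₁ + H₂) ψ)).re := by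
      rw [hray, hinnerH2]
      have h1 := hbig q hqS
      have h2 := (hbnd p q).1
      have h3 := (hbnd q p).1
      have h4 := (hbnd q q).1
      rw [ha]
      rw [show K * ‖q‖ * ‖p‖ = K * ‖p‖ * ‖q‖ from by ring] at h3
      rw [show K * ‖q‖ * ‖q‖ = K * ‖q‖ ^ 2 from by ring] at h4
      linarith [h1, h2, h3, h4]
    have hkey : (J - 2 * K) * ‖q‖ ^ 2 ≤ δ + 2 * K * ‖q‖ := by
      have hcb : c ≤ K * b := by
        have h5 := (hbnd p p).2
        rw [hc, hb]; nlinarith [h5]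
      have hab : a + b = 1 := by linarith [hpyth]
      have ha0 : 0 ≤ a := by rw [ha]; positivity
      have hcdiv : c / b ≤ c + K * a := by
        rw [div_le_iff₀ hbpos]
        have hb1 : b = 1 - a := by linarith
        have h6 : c * a ≤ K * b * a := mul_le_mul_of_nonneg_right hcb ha0
        rw [hb1] at h6 ⊢
        nlinarith [h6]
      have hp1 : ‖p‖ ≤ 1 := by nlinarith [hpyth, ha0, hb, ha, norm_nonneg p]
      have hpq1 : ‖p‖ * ‖q‖ ≤ ‖q‖ := by nlinarith [norm_nonneg q]
      have hchain : J * a + c - 2 * (K * ‖p‖ * ‖q‖) - K * a ≤ c / b + δ :=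
        hlb.trans (hlow.trans (by linarith [hmin]))
      rw [← ha]
      linarith [hchain, hcdiv, mul_le_mul_of_nonneg_left hpq1 hKnn]
    have hqT := quad_root J K δ ‖q‖ hKnn hδ hJ2 (norm_nonneg q) hkey
    rw [← hD] at hqT
    have hr : ‖q‖ ^ 2 ≤ T ^ 2 := by
      rw [hT]
      have hTnn : 0 ≤ (K + D)/(J-2*K) := by positivity
      nlinarith [norm_nonneg q]
    linarith [hpyth, ha.trans_le hr]
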